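/- Let E be an Eisenstein polynomial of degree e over W. If f, s ∈ W[[u]] satisfy f·s ≡ E (mod p²), then the reduction of f mod p is a nonzero element of k[[u]] whose u-adic order is either 0 or e. -/

import Mathlib

open PowerSeries

/-- **Dichotomy for factors of an Eisenstein polynomial mod `p²`.**
Let `W = W(k)` for `k` a perfect field of characteristic `p`, and let
`E = u^e + p·F₀` be an Eisenstein polynomial of degree `e ≥ 1` over `W`
(`F₀` of degree `< e` with unit constant term `c₀`).  If `f, s ∈ W[[u]]` satisfy
`f·s ≡ E (mod p²)` (coefficientwise), then the reduction of `f` mod `p` is a nonzero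
element of `k[[u]]` (some coefficient of `f` is not divisible by `p`) whose `u`-adic
order is either `0` or `e`. -/
theorem eisenstein_factor_order_dichotomy
    (p : ℕ) [Fact p.Prime] (k : Type*) [Field k] [CharP k p] [PerfectRing k p]
    (e : ℕ) (he : 1 ≤ e)
    (F0 : PowerSeries (WittVector p k))
    (hF0deg : ∀ i : ℕ, e ≤ i → coeff (R := WittVector p k) i F0 = 0)
    (hc0 : IsUnit (constantCoeff (R := WittVector p k) F0))
    (f s : PowerSeries (WittVector p k))
    (hfs : ∀ j : ℕ, (p : WittVector p k) ^ 2 ∣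
        coeff (R := WittVector p k) j
          (f * s - (X ^ e + C (R := WittVector p k) (p : WittVector p k) * F0))) :
    (∃ j : ℕ, ¬ (p : WittVector p k) ∣ coeff (R := WittVector p k) j f) ∧
      ∀ v : ℕ,
        (¬ (p : WittVector p k) ∣ coeff (R := WittVector p k) v f ∧
          ∀ i < v, (p : WittVector p k) ∣ coeff (R := WittVector p k) i f) →
        v = 0 ∨ v = e := by
  have hirr : Irreducible (p : WittVector p k) := WittVector.irreducible p
  letI : IsDiscreteValuationRing (WittVector p k) := WittVector.isDiscreteValuationRing
  have hprime : Prime (p : WittVector p k) := hirr.prime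
  have hpne : (p : WittVector p k) ≠ 0 := hprime.ne_zero
  have hcong : ∀ j : ℕ, (p : WittVector p k) ^ 2 ∣
      coeff (R := WittVector p k) j (f * s)
        - ((if j = e then 1 else 0) + (p : WittVector p k) * coeff (R := WittVector p k) j F0) := by
    intro j
    have h := hfs j
    rwa [map_sub, map_add, coeff_X_pow, coeff_C_mul] at h
  have key : ¬ (∀ i ≤ e, (p : WittVector p k) ∣ coeff (R := WittVector p k) i f) := by
    intro h
    have h1 : (p : WittVector p k) ∣ coeff (R := WittVector p k) e (f * s) := by
      rw [coeff_mul]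
      refine Finset.dvd_sum fun x hx => ?_
      refine Dvd.dvd.mul_right (h x.1 ?_) _
      have := Finset.HasAntidiagonal.mem_antidiagonal.mp hx; omega
    have h2 : (p : WittVector p k) ∣ coeff (R := WittVector p k) e (f * s)
        - (1 + (p : WittVector p k) * coeff (R := WittVector p k) e F0) := by
      have := hcong e
      simp only [if_pos rfl] at this
      exact dvd_trans (dvd_pow_self _ two_ne_zero) this
    have h3 : (p : WittVector p k) ∣ (1 : WittVector p k) := by
      have h4 := dvd_sub (dvd_sub h1 h2) (Dvd.intro (coeff (R := WittVector p k) e F0) rfl)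
      have h5 : coeff (R := WittVector p k) e (f*s)
          - (coeff (R := WittVector p k) e (f*s)
            - (1 + (p : WittVector p k) * coeff (R := WittVector p k) e F0))
          - (p : WittVector p k) * coeff (R := WittVector p k) e F0 = 1 := by ring
      rwa [h5] at h4
    exact hprime.not_unit (isUnit_of_dvd_one h3)
  constructor
  · by_contra h
    push_neg at h
    exact key fun i _ => h i
  · rintro v ⟨hv, hlt⟩
    by_contra hcon
    push_neg at hcon
    obtain ⟨hv0, hve⟩ := hcon
    have hvle : v < e := by
      rcases lt_or_ge v e with h | h
      · exact h
      · refine absurd (fun i hi => hlt i ?_) key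
        omega
    have hv1 : 1 ≤ v := Nat.one_le_iff_ne_zero.mpr hv0
    have hps0 : (p : WittVector p k) ∣ constantCoeff (R := WittVector p k) s := by
      have h2 : (p : WittVector p k) ∣ coeff (R := WittVector p k) v (f * s) := by
        have h1 := dvd_trans (dvd_pow_self _ two_ne_zero) (hcong v)
        rw [if_neg (by omega : ¬ v = e)] at h1
        have h6 := dvd_add h1 (Dvd.intro (coeff (R := WittVector p k) v F0) rfl)
        have h7 : coeff (R := WittVector p k) v (f * s)
            - (0 + (p : WittVector p k) * coeff (R := WittVector p k) v F0)
            + (p : WittVector p k) * coeff (R := WittVector p k) v F0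
            = coeff (R := WittVector p k) v (f * s) := by ring
        rwa [h7] at h6
      rw [coeff_mul] at h2
      have hmem : ((v, 0) : ℕ × ℕ) ∈ Finset.HasAntidiagonal.antidiagonal v := by
        simp
      rw [← Finset.sum_erase_add _ _ hmem] at h2
      have hrest : (p : WittVector p k) ∣ ∑ x ∈ (Finset.HasAntidiagonal.antidiagonal v).erase (v, 0),
          coeff (R := WittVector p k) x.1 f * coeff (R := WittVector p k) x.2 s := by
        refine Finset.dvd_sum fun x hx => ?_
        obtain ⟨hne, hx2⟩ := Finset.mem_erase.mp hx
        have hx3 := Finset.HasAntidiagonal.mem_antidiagonal.mp hx2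
        refine Dvd.dvd.mul_right (hlt _ ?_) _
        rcases x with ⟨a, b⟩
        have hne' : ¬(a = v ∧ b = 0) := by simpa [Prod.ext_iff] using hne
        simp only at hx3 ⊢
        omega
      have hfvs0 : (p : WittVector p k) ∣
          coeff (R := WittVector p k) v f * coeff (R := WittVector p k) 0 s := by
        have h8 := dvd_sub h2 hrest
        simpa using h8
      rcases hprime.dvd_mul.mp hfvs0 with h | h
      · exact absurd h hv
      · rwa [coeff_zero_eq_constantCoeff] at h
    have hpf0 : (p : WittVector p k) ∣ constantCoeff (R := WittVector p k) f := by
      have := hlt 0 hv1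
      rwa [coeff_zero_eq_constantCoeff] at this
    have h0 : (p : WittVector p k) ^ 2 ∣ constantCoeff (R := WittVector p k) (f * s)
        - (p : WittVector p k) * constantCoeff (R := WittVector p k) F0 := by
      have h9 := hcong 0
      rw [if_neg (by omega : ¬ (0:ℕ) = e)] at h9
      rwa [coeff_zero_eq_constantCoeff, zero_add] at h9
    have hfs0 : (p : WittVector p k) ^ 2 ∣ constantCoeff (R := WittVector p k) (f * s) := by
      rw [map_mul, sq]
      exact mul_dvd_mul hpf0 hps0
    have hpc0 : (p : WittVector p k) ^ 2 ∣
        (p : WittVector p k) * constantCoeff (R := WittVector p k) F0 := by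
      have h10 := dvd_sub hfs0 h0
      simpa using h10
    have hdvd : (p : WittVector p k) ∣ constantCoeff (R := WittVector p k) F0 := by
      rw [sq] at hpc0
      exact (mul_dvd_mul_iff_left hpne).mp hpc0
    exact hprime.not_unit (isUnit_of_dvd_unit hdvd hc0)
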